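/- Agreement of the transaction-commit model: if δInit →TC* δ (reflexive-transitive closure of the TC transition relation starting from the all-Working initial state), then for all resource managers r1 and r2 it is not the case that δ r1 = Committed and δ r2 = Aborted. -/
import Mathlib


/-- The four states of a resource manager in the transaction-commit model. -/
inductive RMState where
  | working
  | prepared
  | committed
  | aborted
deriving DecidableEq

/-- Every resource manager is prepared or committed. -/
def CanCommit {RMs : Type} (δ : RMs → RMState) : Prop :=
  ∀ r', δ r' = RMState.prepared ∨ δ r' = RMState.committed

/-- No resource manager is committed. -/
def NotCommitted {RMs : Type} (δ : RMs → RMState) : Prop :=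
  ∀ r', δ r' ≠ RMState.committed

/-- The transition relation of the transaction-commit model. -/
inductive TCStep {RMs : Type} [DecidableEq RMs] :
    (RMs → RMState) → (RMs → RMState) → Prop where
  | prepare (δ : RMs → RMState) (r : RMs) (h : δ r = RMState.working) :
      TCStep δ (Function.update δ r RMState.prepared)
  | commit (δ : RMs → RMState) (r : RMs) (h : δ r = RMState.prepared)
      (hc : CanCommit δ) :
      TCStep δ (Function.update δ r RMState.committed)
  | abort (δ : RMs → RMState) (r : RMs)
      (h : δ r = RMState.working ∨ δ r = RMState.prepared)
      (hn : NotCommitted δ) :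
      TCStep δ (Function.update δ r RMState.aborted)

/-- Agreement of the transaction-commit model: in any state reachable from the all-Working
initial state, no two resource managers decide differently. -/
theorem tc_agreement {RMs : Type} [DecidableEq RMs] (δ : RMs → RMState)
    (hreach : Relation.ReflTransGen TCStep (fun _ => RMState.working) δ) :
    ∀ r1 r2 : RMs, ¬ (δ r1 = RMState.committed ∧ δ r2 = RMState.aborted) := by
  induction hreach with
  | refl => intro r1 r2 ⟨h1, _⟩; simp at h1
  | tail _ hstep ih =>
    intro r1 r2 ⟨h1, h2⟩
    cases hstep with
    | prepare r h =>
      simp only [Function.update] at h1 h2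
      split at h1 <;> split at h2 <;> simp_all <;> exact ih r1 r2 h1 h2
    | commit r h hc =>
      simp only [Function.update] at h1 h2
      split at h2
      · simp at h2
      · rcases hc r2 with hp | hp <;> simp_all
    | abort r h hn =>
      simp only [Function.update] at h1 h2
      split at h1
      · simp at h1
      · exact hn r1 h1
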